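/- Let ℓ ≥ 1 be a natural number, let n = (2ℓ+1)³, and let Q(ℓ) = (∏_{{x,y}} |x − y|)^{2/n²}, where the product runs over all unordered pairs of distinct points of the lattice cube L_ℓ. Then Q(ℓ)/ℓ ≥ e^{−1/3}, i.e. Q(ℓ) ≥ e^{−1/3}·ℓ. -/

import Mathlib

open Finset

/-- The point of `ℝ³` (with the Euclidean metric) corresponding to an integer triple. -/
noncomputable def pt (i : ℤ × ℤ × ℤ) : EuclideanSpace ℝ (Fin 3) :=
  (WithLp.equiv 2 (Fin 3 → ℝ)).symm ![(i.1 : ℝ), (i.2.1 : ℝ), (i.2.2 : ℝ)]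

/-- The lattice cube `L_ℓ`: integer triples `(i₁,i₂,i₃)` with `1 ≤ i₁,i₂,i₃ ≤ 2ℓ+1`. -/
noncomputable def latticeCube (ℓ : ℕ) : Finset (ℤ × ℤ × ℤ) :=
  Finset.Icc 1 (2 * (ℓ : ℤ) + 1) ×ˢ Finset.Icc 1 (2 * (ℓ : ℤ) + 1) ×ˢ
    Finset.Icc 1 (2 * (ℓ : ℤ) + 1)

/-- The product of the Euclidean distances `|x − y|` over all unordered pairs `{x, y}` of
distinct points of the lattice cube `L_ℓ`. -/
noncomputable def pairProd (ℓ : ℕ) : ℝ :=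
  ∏ p ∈ (latticeCube ℓ).sym2.filter (fun p => ¬ p.IsDiag),
    Sym2.lift ⟨fun x y => dist (pt x) (pt y), fun _ _ => dist_comm _ _⟩ p

/-- `Q(ℓ)`: the `2/n²`-th power of the product of distances over all unordered pairs of
distinct points of `L_ℓ`, where `n = (2ℓ+1)³`. -/
noncomputable def Q (ℓ : ℕ) : ℝ :=
  pairProd ℓ ^ ((2 : ℝ) / (((2 * ℓ + 1) ^ 3 : ℕ) : ℝ) ^ 2)


namespace LB

noncomputable def F (t : ℝ) : ℝ := t * Real.log t - t
noncomputable def H (t : ℝ) : ℝ := t^2/2 * Real.log t - 3/4 * t^2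
noncomputable def A (z : ℤ) : ℝ := Real.log (max |(z:ℝ)| 1)
noncomputable def ee (z : ℤ) : ℝ := if z = 0 then 0 else 1
noncomputable def cst : ℝ := 3/4 * Real.log 2 + 1/36
noncomputable def Lg (m : ℤ) : ℝ := ∑ d ∈ Finset.Icc (1:ℤ) m, Real.log (d:ℝ)
noncomputable def dfun : Sym2 (ℤ×ℤ×ℤ) → ℝ :=
  Sym2.lift ⟨fun x y => dist (pt x) (pt y), fun _ _ => dist_comm _ _⟩

lemma key1 {x : ℝ} (hx : 1 ≤ x) : Real.log x ≤ (x - x⁻¹)/2 := by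
  rcases eq_or_lt_of_le hx with h | h
  · simp [← h]
  · have h0 : (0:ℝ) < x := by linarith
    have h1 : Real.log x < Real.sinh (Real.log x) :=
      Real.self_lt_sinh_iff.mpr (Real.log_pos h)
    rw [Real.sinh_log h0] at h1
    linarith

lemma key1' {x y : ℝ} (hy : 0 < y) (hxy : y ≤ x) :
    2*x*y*(Real.log x - Real.log y) ≤ x^2 - y^2 := by
  have hx : 0 < x := lt_of_lt_of_le hy hxy
  have h1 : (1:ℝ) ≤ x/y := (one_le_div hy).mpr hxy
  have h2 := key1 h1
  rw [Real.log_div hx.ne' hy.ne'] at h2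
  have h3 : (x/y - (x/y)⁻¹)/2 = (x^2 - y^2)/(2*x*y) := by
    rw [inv_div]; field_simp
  rw [h3] at h2
  have h4 := (le_div_iff₀ (by positivity : (0:ℝ) < 2*x*y)).mp h2
  linarith

lemma P1 {t : ℝ} (ht : 1 ≤ t) : F (t + 1/2) - F (t - 1/2) ≤ Real.log t := by
  have ht0 : (0:ℝ) < t := by linarith
  have ha0 : (0:ℝ) < t - 1/2 := by linarith
  have h1 := key1' ht0 (by linarith : t ≤ t + 1/2)
  have h2 := key1' ha0 (by linarith : t - 1/2 ≤ t)
  unfold F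
  set Lb := Real.log (t + 1/2)
  set La := Real.log (t - 1/2)
  set Lt := Real.log t
  nlinarith [h1, h2, ht0]

lemma P2 {t : ℝ} (ht : 5/2 ≤ t) : H t - H (t-1) ≤ F t := by
  have ht0 : (0:ℝ) < t := by linarith
  have ha0 : (0:ℝ) < t - 1 := by linarith
  have h1 := key1' ha0 (by linarith : t - 1 ≤ t)
  have h2 := Real.one_sub_inv_le_log_of_pos ht0
  have h2' : 1 - 1/t ≤ Real.log t := by rw [one_div]; exact h2
  have h3 : 2*t - 2 ≤ 2*t*Real.log t := by
    have := mul_le_mul_of_nonneg_left h2' (by linarith : (0:ℝ) ≤ 2*t)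
    have ht' : 2*t*(1 - 1/t) = 2*t - 2 := by field_simp
    linarith [ht'.symm ▸ this]
  unfold F H
  set Lt := Real.log t
  set La := Real.log (t-1)
  nlinarith [mul_le_mul_of_nonneg_left h1 (by linarith : (0:ℝ) ≤ t - 1), h3, ht0]

lemma A_nonneg (z : ℤ) : 0 ≤ A z := Real.log_nonneg (le_max_right _ _)

lemma A_eq {d : ℤ} (hd : 1 ≤ d) : A d = Real.log (d:ℝ) := by
  have h1 : (1:ℝ) ≤ (d:ℝ) := by exact_mod_cast hd
  unfold A
  rw [abs_of_nonneg (by linarith), max_eq_left h1]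

lemma A_neg (z : ℤ) : A (-z) = A z := by
  unfold A; push_cast; rw [abs_neg]

lemma Lg_nonneg (m : ℤ) : 0 ≤ Lg m := by
  apply Finset.sum_nonneg
  intro d hd
  have : (1:ℤ) ≤ d := (Finset.mem_Icc.mp hd).1
  exact Real.log_nonneg (by exact_mod_cast this)

lemma telescope (ψ : ℤ → ℝ) (a : ℤ) :
    ∀ b : ℤ, a - 1 ≤ b → ∑ d ∈ Finset.Icc a b, (ψ d - ψ (d-1)) = ψ b - ψ (a-1) := by
  refine Int.le_induction ?_ ?_
  · rw [Finset.Icc_eq_empty (by omega)]; simp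
  · intro n _ ih
    have hmem : n + 1 ∉ Finset.Icc a n := by simp
    have hins : Finset.Icc a (n+1) = insert (n+1) (Finset.Icc a n) := by
      ext d; simp only [Finset.mem_Icc, Finset.mem_insert]; omega
    have hnn : n + 1 - 1 = n := by ring
    rw [hins, Finset.sum_insert hmem, ih, hnn]
    ring

lemma Lg_ge {m : ℤ} (hm : 1 ≤ m) : F ((m:ℝ) + 1/2) - F (1/2) ≤ Lg m := by
  have h1 : ∑ d ∈ Finset.Icc (1:ℤ) m, (F ((d:ℝ) + 1/2) - F ((d:ℝ) - 1/2)) ≤ Lg m := by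
    apply Finset.sum_le_sum
    intro d hd
    have : (1:ℤ) ≤ d := (Finset.mem_Icc.mp hd).1
    exact P1 (by exact_mod_cast this)
  have h2 : ∑ d ∈ Finset.Icc (1:ℤ) m, (F ((d:ℝ) + 1/2) - F ((d:ℝ) - 1/2))
      = F ((m:ℝ) + 1/2) - F (((1-1 : ℤ):ℝ) + 1/2) := by
    rw [← telescope (fun d : ℤ => F ((d:ℝ) + 1/2)) 1 m (by omega)]
    apply Finset.sum_congr rfl
    intro d _
    have hc : ((d - 1 : ℤ):ℝ) + 1/2 = (d:ℝ) - 1/2 := by push_cast; ring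
    simp only [hc]
  have h3 : (((1-1 : ℤ):ℝ) + 1/2) = (1/2 : ℝ) := by norm_num
  rw [h3] at h2
  linarith [h2 ▸ h1]

lemma Lg_ge2 {m : ℤ} (hm : 2 ≤ m) :
    H ((m:ℝ) + 1/2) - H ((m:ℝ) - 1/2) - F (1/2) ≤ Lg m := by
  have h1 := Lg_ge (by omega : (1:ℤ) ≤ m)
  have h2 : H ((m:ℝ) + 1/2) - H (((m:ℝ) + 1/2) - 1) ≤ F ((m:ℝ) + 1/2) := by
    apply P2
    have : (2:ℝ) ≤ (m:ℝ) := by exact_mod_cast hm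
    linarith
  have h3 : ((m:ℝ) + 1/2) - 1 = (m:ℝ) - 1/2 := by ring
  rw [h3] at h2
  linarith

lemma row {N i : ℤ} (hi : i ∈ Finset.Icc (1:ℤ) N) :
    Lg (i-1) + Lg (N-i) ≤ ∑ j ∈ Finset.Icc (1:ℤ) N, A (i - j) := by
  obtain ⟨hi1, hiN⟩ := Finset.mem_Icc.mp hi
  have e1 : ∑ j ∈ Finset.Icc (1:ℤ) (i-1), A (i - j) = Lg (i-1) := by
    apply Finset.sum_nbij' (fun j => i - j) (fun d => i - d)
    · intro a ha; simp only [Finset.mem_Icc] at *; omega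
    · intro a ha; simp only [Finset.mem_Icc] at *; omega
    · intro a _; ring
    · intro a _; ring
    · intro a ha
      simp only [Finset.mem_Icc] at ha
      exact A_eq (by omega)
  have e2 : ∑ j ∈ Finset.Icc (i+1) N, A (i - j) = Lg (N-i) := by
    apply Finset.sum_nbij' (fun j => j - i) (fun d => d + i)
    · intro a ha; simp only [Finset.mem_Icc] at *; omega
    · intro a ha; simp only [Finset.mem_Icc] at *; omega
    · intro a _; ring
    · intro a _; ring
    · intro a ha
      simp only [Finset.mem_Icc] at ha
      have h1 : i - a = -(a - i) := by ring
      rw [h1, A_neg]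
      exact A_eq (by omega)
  have hdis : Disjoint (Finset.Icc (1:ℤ) (i-1)) (Finset.Icc (i+1) N) := by
    rw [Finset.disjoint_left]
    intro a ha hb
    simp only [Finset.mem_Icc] at *
    omega
  have hsub : Finset.Icc (1:ℤ) (i-1) ∪ Finset.Icc (i+1) N ⊆ Finset.Icc 1 N := by
    intro a ha
    simp only [Finset.mem_union, Finset.mem_Icc] at *
    omega
  calc Lg (i-1) + Lg (N-i)
      = ∑ j ∈ Finset.Icc (1:ℤ) (i-1) ∪ Finset.Icc (i+1) N, A (i - j) := by
        rw [Finset.sum_union hdis, e1, e2]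
    _ ≤ ∑ j ∈ Finset.Icc (1:ℤ) N, A (i - j) :=
        Finset.sum_le_sum_of_subset_of_nonneg hsub (fun j _ _ => A_nonneg _)

lemma T0_bound {N : ℤ} (hN : 3 ≤ N) :
    2 * (H ((N:ℝ) - 1/2) - H (3/2) - ((N:ℝ) - 2) * F (1/2))
      ≤ ∑ p ∈ Finset.Icc (1:ℤ) N ×ˢ Finset.Icc (1:ℤ) N, A (p.1 - p.2) := by
  rw [Finset.sum_product]
  have h1 : ∑ i ∈ Finset.Icc (1:ℤ) N, (Lg (i-1) + Lg (N-i))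
      ≤ ∑ i ∈ Finset.Icc (1:ℤ) N, ∑ j ∈ Finset.Icc (1:ℤ) N, A (i - j) :=
    Finset.sum_le_sum (fun i hi => row hi)
  have h2 : ∑ i ∈ Finset.Icc (1:ℤ) N, Lg (i-1) = ∑ m ∈ Finset.Icc (0:ℤ) (N-1), Lg m := by
    apply Finset.sum_nbij' (fun i => i - 1) (fun m => m + 1)
    · intro a ha; simp only [Finset.mem_Icc] at *; omega
    · intro a ha; simp only [Finset.mem_Icc] at *; omega
    · intro a _; ring
    · intro a _; ring
    · intro a _; rfl
  have h3 : ∑ i ∈ Finset.Icc (1:ℤ) N, Lg (N-i) = ∑ m ∈ Finset.Icc (0:ℤ) (N-1), Lg m := by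
    apply Finset.sum_nbij' (fun i => N - i) (fun m => N - m)
    · intro a ha; simp only [Finset.mem_Icc] at *; omega
    · intro a ha; simp only [Finset.mem_Icc] at *; omega
    · intro a _; ring
    · intro a _; ring
    · intro a _; rfl
  have h4 : ∑ m ∈ Finset.Icc (2:ℤ) (N-1), Lg m ≤ ∑ m ∈ Finset.Icc (0:ℤ) (N-1), Lg m :=
    Finset.sum_le_sum_of_subset_of_nonneg
      (Finset.Icc_subset_Icc (by omega) le_rfl) (fun m _ _ => Lg_nonneg m)
  have h6 : ∑ m ∈ Finset.Icc (2:ℤ) (N-1), (H ((m:ℝ)+1/2) - H ((m:ℝ)-1/2) - F (1/2))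
      ≤ ∑ m ∈ Finset.Icc (2:ℤ) (N-1), Lg m :=
    Finset.sum_le_sum (fun m hm => Lg_ge2 (Finset.mem_Icc.mp hm).1)
  have h7 : ∑ m ∈ Finset.Icc (2:ℤ) (N-1), (H ((m:ℝ)+1/2) - H ((m:ℝ)-1/2))
      = H ((N:ℝ)-1/2) - H (3/2) := by
    have ht := telescope (fun m : ℤ => H ((m:ℝ)+1/2)) 2 (N-1) (by omega)
    have e1 : ∑ m ∈ Finset.Icc (2:ℤ) (N-1), (H ((m:ℝ)+1/2) - H ((m:ℝ)-1/2))
        = ∑ m ∈ Finset.Icc (2:ℤ) (N-1), ((fun m : ℤ => H ((m:ℝ)+1/2)) m - (fun m : ℤ => H ((m:ℝ)+1/2)) (m-1)) := by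
      apply Finset.sum_congr rfl
      intro m _
      have hc : ((m - 1 : ℤ):ℝ) + 1/2 = (m:ℝ) - 1/2 := by push_cast; ring
      simp only [hc]
    rw [e1, ht]
    show H (((N - 1 : ℤ):ℝ) + 1/2) - H (((2 - 1 : ℤ):ℝ) + 1/2) = _
    have hc2 : ((N - 1 : ℤ):ℝ) + 1/2 = (N:ℝ) - 1/2 := by push_cast; ring
    have hc3 : ((2 - 1 : ℤ):ℝ) + 1/2 = (3/2 : ℝ) := by push_cast; ring
    rw [hc2, hc3]
  have h8 : ∑ _m ∈ Finset.Icc (2:ℤ) (N-1), F (1/2) = ((N:ℝ)-2) * F (1/2) := by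
    rw [Finset.sum_const, Int.card_Icc, nsmul_eq_mul]
    have h9 : ((N - 1 + 1 - 2).toNat : ℤ) = N - 2 := by
      rw [Int.toNat_of_nonneg (by omega)]; ring
    have h10 : ((N - 1 + 1 - 2).toNat : ℝ) = (N:ℝ) - 2 := by
      exact_mod_cast congrArg (fun z : ℤ => (z : ℝ)) h9
    rw [h10]
  have h10 : ∑ m ∈ Finset.Icc (2:ℤ) (N-1), (H ((m:ℝ)+1/2) - H ((m:ℝ)-1/2) - F (1/2))
      = H ((N:ℝ)-1/2) - H (3/2) - ((N:ℝ)-2) * F (1/2) := by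
    rw [Finset.sum_sub_distrib, h7, h8]
  calc 2 * (H ((N:ℝ) - 1/2) - H (3/2) - ((N:ℝ) - 2) * F (1/2))
      ≤ 2 * ∑ m ∈ Finset.Icc (2:ℤ) (N-1), Lg m := by
        rw [← h10]; linarith [h6]
    _ ≤ 2 * ∑ m ∈ Finset.Icc (0:ℤ) (N-1), Lg m := by linarith [h4]
    _ = ∑ i ∈ Finset.Icc (1:ℤ) N, (Lg (i-1) + Lg (N-i)) := by
        rw [Finset.sum_add_distrib, h2, h3]; ring
    _ ≤ _ := h1

lemma cst_nonneg : 0 ≤ cst := by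
  have := Real.log_two_gt_d9; unfold cst; norm_num; nlinarith

lemma ee_nonneg (z : ℤ) : 0 ≤ ee z := by unfold ee; split <;> norm_num

lemma two_cst_le_log3 : 2 * cst ≤ Real.log 3 := by
  have h1 : (1:ℝ)/9 ≤ Real.log ((9:ℝ)/8) := by
    have := Real.one_sub_inv_le_log_of_pos (show (0:ℝ) < 9/8 by norm_num)
    norm_num at this
    linarith
  have h2 : Real.log ((9:ℝ)/8) = 2*Real.log 3 - 3*Real.log 2 := by
    rw [Real.log_div (by norm_num) (by norm_num),
      show (9:ℝ) = 3^2 by norm_num, show (8:ℝ) = 2^3 by norm_num,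
      Real.log_pow, Real.log_pow]
    push_cast; ring
  unfold cst; linarith [h2 ▸ h1]

lemma sq_one_le {z : ℤ} (hz : z ≠ 0) : (1:ℝ) ≤ (z:ℝ)^2 := by
  have h := Int.one_le_abs hz
  have h1 : (1:ℝ) ≤ |(z:ℝ)| := by exact_mod_cast (by exact_mod_cast h : (1:ℤ) ≤ |z|)
  nlinarith [sq_abs (z:ℝ), abs_nonneg (z:ℝ)]

lemma pair_log (a b c : ℤ) :
    1/3*(A a + A b + A c) + cst * (ee a * ee b * ee c)
      ≤ Real.log (Real.sqrt ((a:ℝ)^2 + (b:ℝ)^2 + (c:ℝ)^2)) := by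
  have hs0 : (0:ℝ) ≤ (a:ℝ)^2 + (b:ℝ)^2 + (c:ℝ)^2 := by positivity
  rw [Real.log_sqrt hs0]
  by_cases hall : a ≠ 0 ∧ b ≠ 0 ∧ c ≠ 0
  · obtain ⟨ha, hb, hc⟩ := hall
    have haR : ((a:ℝ)) ≠ 0 := Int.cast_ne_zero.mpr ha
    have hbR : ((b:ℝ)) ≠ 0 := Int.cast_ne_zero.mpr hb
    have hcR : ((c:ℝ)) ≠ 0 := Int.cast_ne_zero.mpr hc
    have ha1 : (1:ℝ) ≤ |(a:ℝ)| := by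
      have := Int.one_le_abs ha; exact_mod_cast (by exact_mod_cast this : (1:ℤ) ≤ |a|)
    have hb1 : (1:ℝ) ≤ |(b:ℝ)| := by
      have := Int.one_le_abs hb; exact_mod_cast (by exact_mod_cast this : (1:ℤ) ≤ |b|)
    have hc1 : (1:ℝ) ≤ |(c:ℝ)| := by
      have := Int.one_le_abs hc; exact_mod_cast (by exact_mod_cast this : (1:ℤ) ≤ |c|)
    have hAa : A a = Real.log |(a:ℝ)| := by unfold A; rw [max_eq_left ha1]
    have hAb : A b = Real.log |(b:ℝ)| := by unfold A; rw [max_eq_left hb1]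
    have hAc : A c = Real.log |(c:ℝ)| := by unfold A; rw [max_eq_left hc1]
    have heea : ee a = 1 := by unfold ee; simp [ha]
    have heeb : ee b = 1 := by unfold ee; simp [hb]
    have heec : ee c = 1 := by unfold ee; simp [hc]
    have hs27 : 27*((a:ℝ)^2*(b:ℝ)^2*(c:ℝ)^2) ≤ ((a:ℝ)^2 + (b:ℝ)^2 + (c:ℝ)^2)^3 := by
      nlinarith [sq_nonneg ((a:ℝ)^2-(b:ℝ)^2), sq_nonneg ((b:ℝ)^2-(c:ℝ)^2),
        sq_nonneg ((a:ℝ)^2-(c:ℝ)^2), sq_nonneg (a:ℝ), sq_nonneg (b:ℝ), sq_nonneg (c:ℝ),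
        sq_nonneg ((a:ℝ)^2+(b:ℝ)^2-2*(c:ℝ)^2), sq_nonneg ((b:ℝ)^2+(c:ℝ)^2-2*(a:ℝ)^2),
        sq_nonneg ((a:ℝ)^2+(c:ℝ)^2-2*(b:ℝ)^2),
        mul_nonneg (sq_nonneg (a:ℝ)) (sq_nonneg (b:ℝ)),
        mul_nonneg (sq_nonneg (b:ℝ)) (sq_nonneg (c:ℝ)),
        mul_nonneg (sq_nonneg (a:ℝ)) (sq_nonneg (c:ℝ))]
    have hppos : (0:ℝ) < 27*((a:ℝ)^2*(b:ℝ)^2*(c:ℝ)^2) := by positivity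
    have hlog := Real.log_le_log hppos hs27
    have hexp : Real.log (27*((a:ℝ)^2*(b:ℝ)^2*(c:ℝ)^2))
        = 3*Real.log 3 + 2*Real.log |(a:ℝ)| + 2*Real.log |(b:ℝ)| + 2*Real.log |(c:ℝ)| := by
      rw [Real.log_mul (by norm_num) (by positivity), Real.log_mul (by positivity) (by positivity),
        Real.log_mul (by positivity) (by positivity),
        show (27:ℝ) = 3^3 by norm_num, Real.log_pow,
        ← sq_abs (a:ℝ), ← sq_abs (b:ℝ), ← sq_abs (c:ℝ), sq, sq, sq,
        Real.log_mul (by positivity) (by positivity),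
        Real.log_mul (by positivity) (by positivity),
        Real.log_mul (by positivity) (by positivity)]
      push_cast; ring
    have hexp2 : Real.log (((a:ℝ)^2 + (b:ℝ)^2 + (c:ℝ)^2)^3)
        = 3 * Real.log ((a:ℝ)^2 + (b:ℝ)^2 + (c:ℝ)^2) := by
      rw [Real.log_pow]; push_cast; ring
    have hla : 0 ≤ Real.log |(a:ℝ)| := Real.log_nonneg ha1
    have hlb : 0 ≤ Real.log |(b:ℝ)| := Real.log_nonneg hb1
    have hlc : 0 ≤ Real.log |(c:ℝ)| := Real.log_nonneg hc1
    rw [hAa, hAb, hAc, heea, heeb, heec]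
    have h3 := two_cst_le_log3
    rw [hexp, hexp2] at hlog
    linarith
  · have he : ee a * ee b * ee c = 0 := by
      by_cases ha : a = 0
      · simp [ee, ha]
      · by_cases hb : b = 0
        · simp [ee, hb]
        · by_cases hc : c = 0
          · simp [ee, hc]
          · exact absurd ⟨ha, hb, hc⟩ hall
    rw [he, mul_zero, add_zero]
    by_cases hz : a = 0 ∧ b = 0 ∧ c = 0
    · obtain ⟨h1, h2, h3⟩ := hz
      subst h1; subst h2; subst h3
      simp [A]
    · have hs1 : (1:ℝ) ≤ (a:ℝ)^2 + (b:ℝ)^2 + (c:ℝ)^2 := by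
        by_cases ha : a = 0
        · by_cases hb : b = 0
          · have hc : c ≠ 0 := fun hc => hz ⟨ha, hb, hc⟩
            nlinarith [sq_one_le hc, sq_nonneg (a:ℝ), sq_nonneg (b:ℝ)]
          · nlinarith [sq_one_le hb, sq_nonneg (a:ℝ), sq_nonneg (c:ℝ)]
        · nlinarith [sq_one_le ha, sq_nonneg (b:ℝ), sq_nonneg (c:ℝ)]
      set s : ℝ := (a:ℝ)^2 + (b:ℝ)^2 + (c:ℝ)^2 with hsdef
      have hmax : ∀ z : ℤ, (1:ℝ) ≤ max |(z:ℝ)| 1 := fun z => le_max_right _ _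
      have hMa : (max |(a:ℝ)| 1)^2 ≤ s := by
        rcases le_total |(a:ℝ)| 1 with h | h
        · rw [max_eq_right h]; simpa using hs1
        · rw [max_eq_left h]
          nlinarith [sq_abs (a:ℝ), sq_nonneg (b:ℝ), sq_nonneg (c:ℝ)]
      have hMb : (max |(b:ℝ)| 1)^2 ≤ s := by
        rcases le_total |(b:ℝ)| 1 with h | h
        · rw [max_eq_right h]; simpa using hs1
        · rw [max_eq_left h]
          nlinarith [sq_abs (b:ℝ), sq_nonneg (a:ℝ), sq_nonneg (c:ℝ)]
      have hMc : (max |(c:ℝ)| 1)^2 ≤ s := by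
        rcases le_total |(c:ℝ)| 1 with h | h
        · rw [max_eq_right h]; simpa using hs1
        · rw [max_eq_left h]
          nlinarith [sq_abs (c:ℝ), sq_nonneg (a:ℝ), sq_nonneg (b:ℝ)]
      have ha0 : (0:ℝ) < max |(a:ℝ)| 1 := lt_of_lt_of_le one_pos (hmax a)
      have hb0 : (0:ℝ) < max |(b:ℝ)| 1 := lt_of_lt_of_le one_pos (hmax b)
      have hc0 : (0:ℝ) < max |(c:ℝ)| 1 := lt_of_lt_of_le one_pos (hmax c)
      have h12 : (max |(a:ℝ)| 1)^2 * (max |(b:ℝ)| 1)^2 ≤ s^2 := by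
        nlinarith [sq_nonneg (max |(a:ℝ)| 1), sq_nonneg (max |(b:ℝ)| 1), hs1]
      have h123 : ((max |(a:ℝ)| 1) * (max |(b:ℝ)| 1) * (max |(c:ℝ)| 1))^2 ≤ s^3 := by
        have e1 : ((max |(a:ℝ)| 1) * (max |(b:ℝ)| 1) * (max |(c:ℝ)| 1))^2
            = (max |(a:ℝ)| 1)^2 * (max |(b:ℝ)| 1)^2 * (max |(c:ℝ)| 1)^2 := by ring
        rw [e1]
        nlinarith [h12, hMc, sq_nonneg (max |(c:ℝ)| 1), hs1, sq_nonneg s]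
      have hppos : (0:ℝ) < ((max |(a:ℝ)| 1) * (max |(b:ℝ)| 1) * (max |(c:ℝ)| 1))^2 := by positivity
      have hlog := Real.log_le_log hppos h123
      have hexp : Real.log (((max |(a:ℝ)| 1) * (max |(b:ℝ)| 1) * (max |(c:ℝ)| 1))^2)
          = 2*(A a + A b + A c) := by
        rw [Real.log_pow, Real.log_mul (by positivity) hc0.ne',
          Real.log_mul ha0.ne' hb0.ne']
        unfold A; push_cast; ring
      have hexp2 : Real.log (s^3) = 3 * Real.log s := by
        rw [Real.log_pow]; push_cast; ring
      rw [hexp, hexp2] at hlog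
      linarith

lemma dist_pt (x y : ℤ × ℤ × ℤ) :
    dist (pt x) (pt y) = Real.sqrt ((((x.1 - y.1 : ℤ)):ℝ)^2
      + (((x.2.1 - y.2.1 : ℤ)):ℝ)^2 + (((x.2.2 - y.2.2 : ℤ)):ℝ)^2) := by
  rw [EuclideanSpace.dist_eq]
  congr 1
  rw [Fin.sum_univ_three]
  simp only [pt, WithLp.equiv_symm_apply, WithLp.ofLp_toLp, Real.dist_eq,
    Matrix.cons_val_zero, Matrix.cons_val_one, Matrix.head_cons,
    Matrix.cons_val_two, Matrix.tail_cons, sq_abs]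
  push_cast
  ring

lemma sum_fgh (I : Finset ℤ) (f g h : ℤ → ℤ → ℝ) :
    ∑ z ∈ ((I ×ˢ (I ×ˢ I)) ×ˢ (I ×ˢ (I ×ˢ I))),
        f z.1.1 z.2.1 * g z.1.2.1 z.2.2.1 * h z.1.2.2 z.2.2.2
    = (∑ p ∈ I ×ˢ I, f p.1 p.2) * (∑ p ∈ I ×ˢ I, g p.1 p.2) * (∑ p ∈ I ×ˢ I, h p.1 p.2) := by
  have step1 : ∑ z ∈ ((I ×ˢ (I ×ˢ I)) ×ˢ (I ×ˢ (I ×ˢ I))),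
      f z.1.1 z.2.1 * g z.1.2.1 z.2.2.1 * h z.1.2.2 z.2.2.2
      = ∑ w ∈ (I ×ˢ I) ×ˢ ((I ×ˢ I) ×ˢ (I ×ˢ I)),
        f w.1.1 w.1.2 * g w.2.1.1 w.2.1.2 * h w.2.2.1 w.2.2.2 := by
    apply Finset.sum_nbij'
      (i := fun z => ((z.1.1, z.2.1), ((z.1.2.1, z.2.2.1), (z.1.2.2, z.2.2.2))))
      (j := fun w => ((w.1.1, (w.2.1.1, w.2.2.1)), (w.1.2, (w.2.1.2, w.2.2.2))))
    · intro a ha; simp only [Finset.mem_product] at *; tauto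
    · intro a ha; simp only [Finset.mem_product] at *; tauto
    · intro a _; rfl
    · intro a _; rfl
    · intro a _; rfl
  rw [step1, Finset.sum_product]
  have step2 : ∀ p : ℤ × ℤ, ∑ v ∈ (I ×ˢ I) ×ˢ (I ×ˢ I),
      f p.1 p.2 * g v.1.1 v.1.2 * h v.2.1 v.2.2
      = f p.1 p.2 * ((∑ q ∈ I ×ˢ I, g q.1 q.2) * (∑ r ∈ I ×ˢ I, h r.1 r.2)) := by
    intro p
    rw [Finset.sum_mul_sum (I ×ˢ I) (I ×ˢ I) (fun q => g q.1 q.2) (fun r => h r.1 r.2),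
      Finset.mul_sum, Finset.sum_product]
    apply Finset.sum_congr rfl; intro q _
    rw [Finset.mul_sum]
    apply Finset.sum_congr rfl; intro r _
    ring
  rw [Finset.sum_congr rfl (fun p _ => step2 p), ← Finset.sum_mul]
  ring

lemma esum (I : Finset ℤ) : ∑ p ∈ I ×ˢ I, ee (p.1 - p.2) = (I.card : ℝ)^2 - I.card := by
  rw [Finset.sum_product]
  have hrow : ∀ i ∈ I, ∑ j ∈ I, ee (i - j) = (I.card : ℝ) - 1 := by
    intro i hi
    have hterm : ∀ j, ee (i - j) = 1 - (if j = i then (1:ℝ) else 0) := by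
      intro j
      unfold ee
      by_cases h : j = i
      · simp [h]
      · have : i - j ≠ 0 := by omega
        simp [this, h]
    rw [Finset.sum_congr rfl (fun j _ => hterm j), Finset.sum_sub_distrib,
      Finset.sum_const, Finset.sum_ite_eq' I i (fun _ => (1:ℝ)), if_pos hi]
    simp
  rw [Finset.sum_congr rfl hrow, Finset.sum_const]
  simp
  ring

lemma onesum (I : Finset ℤ) : ∑ _p ∈ I ×ˢ I, (1:ℝ) = (I.card : ℝ)^2 := by
  rw [Finset.sum_const, Finset.card_product]
  simp
  ring

lemma pt_inj : Function.Injective pt := by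
  intro x y h
  have h0 := congrArg (fun v => v 0) h
  have h1 := congrArg (fun v => v 1) h
  have h2 := congrArg (fun v => v 2) h
  simp only [pt, WithLp.equiv_symm_apply, WithLp.ofLp_toLp, Matrix.cons_val_zero, Matrix.cons_val_one,
    Matrix.head_cons, Matrix.cons_val_two, Matrix.tail_cons, Int.cast_injective.eq_iff] at h0 h1 h2
  exact Prod.ext h0 (Prod.ext h1 h2)

lemma pt_ne {x y : ℤ × ℤ × ℤ} (h : x ≠ y) : dist (pt x) (pt y) ≠ 0 := by
  simp only [dist_ne_zero]
  exact fun hc => h (pt_inj hc)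

lemma sym2_filter_eq (s : Finset (ℤ×ℤ×ℤ)) :
    s.offDiag.image Sym2.mk.uncurry = s.sym2.filter (fun p => ¬ p.IsDiag) := by
  ext p
  induction p using Sym2.ind with
  | _ a b =>
    simp only [Finset.mem_image, Finset.mem_filter,
      Finset.mk_mem_sym2_iff, Sym2.mk_isDiag_iff]
    constructor
    · rintro ⟨⟨u, v⟩, huv, heq⟩
      rw [Finset.mem_offDiag] at huv
      rw [Function.uncurry_apply_pair, Sym2.eq_iff] at heq
      rcases heq with ⟨rfl, rfl⟩ | ⟨rfl, rfl⟩
      · exact ⟨⟨huv.1, huv.2.1⟩, huv.2.2⟩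
      · exact ⟨⟨huv.2.1, huv.1⟩, fun hh => huv.2.2 hh.symm⟩
    · rintro ⟨⟨ha, hb⟩, hab⟩
      exact ⟨(a, b), Finset.mem_offDiag.mpr ⟨ha, hb, hab⟩, rfl⟩

lemma fiber_two {s : Finset (ℤ×ℤ×ℤ)} {a b : ℤ×ℤ×ℤ} (ha : a ∈ s) (hb : b ∈ s) (hab : a ≠ b) :
    (s.offDiag.filter (fun z => Sym2.mk.uncurry z = s(a,b))).card = 2 := by
  have hset : s.offDiag.filter (fun z => Sym2.mk.uncurry z = s(a,b)) = {(a,b), (b,a)} := by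
    ext ⟨u, v⟩
    simp only [Finset.mem_filter, Finset.mem_offDiag, Finset.mem_insert,
      Finset.mem_singleton, Function.uncurry_apply_pair, Sym2.eq_iff, Prod.mk.injEq]
    constructor
    · rintro ⟨_, h | h⟩
      · left; exact ⟨h.1, h.2⟩
      · right; exact ⟨h.1, h.2⟩
    · rintro (⟨rfl, rfl⟩ | ⟨rfl, rfl⟩)
      · exact ⟨⟨ha, hb, hab⟩, Or.inl ⟨rfl, rfl⟩⟩
      · exact ⟨⟨hb, ha, fun hh => hab hh.symm⟩, Or.inr ⟨rfl, rfl⟩⟩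
  rw [hset, Finset.card_insert_of_notMem, Finset.card_singleton]
  simp only [Finset.mem_singleton, Prod.mk.injEq, not_and]
  intro h _
  exact hab h

lemma log_sum (s : Finset (ℤ×ℤ×ℤ)) :
    ∑ z ∈ s ×ˢ s, Real.log (dist (pt z.1) (pt z.2))
    = 2 * ∑ p ∈ s.sym2.filter (fun p => ¬ p.IsDiag), Real.log (dfun p) := by
  rw [← Finset.diag_union_offDiag s, Finset.sum_union (Finset.disjoint_diag_offDiag s)]
  have hdiag : ∑ z ∈ s.diag, Real.log (dist (pt z.1) (pt z.2)) = 0 := by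
    apply Finset.sum_eq_zero
    intro z hz
    rw [Finset.mem_diag] at hz
    rw [hz.2, dist_self, Real.log_zero]
  rw [hdiag, zero_add]
  have hcong : ∀ z ∈ s.offDiag, Real.log (dist (pt z.1) (pt z.2))
      = (fun p => Real.log (dfun p)) (Sym2.mk.uncurry z) := by
    intro z _
    rfl
  rw [Finset.sum_congr rfl hcong,
    Finset.sum_comp (fun p => Real.log (dfun p)) Sym2.mk.uncurry, sym2_filter_eq]
  rw [Finset.mul_sum]
  apply Finset.sum_congr rfl
  intro p hp
  induction p using Sym2.ind with
  | _ a b =>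
    simp only [Finset.mem_filter, Finset.mk_mem_sym2_iff, Sym2.mk_isDiag_iff] at hp
    obtain ⟨⟨ha, hb⟩, hab⟩ := hp
    rw [fiber_two ha hb hab, nsmul_eq_mul]
    norm_num

lemma analytic {x : ℝ} (hx : 1 ≤ x) :
    (2*x+1)^2 * (Real.log x - 1/3)
      ≤ 2*(H (2*x + 1/2) - H (3/2) - (2*x-1) * F (1/2)) + cst * (4*x^2 - 2*x + 2/3) := by
  have hx0 : (0:ℝ) < x := by linarith
  have hlx0 : 0 ≤ Real.log x := Real.log_nonneg hx
  have hA : Real.log 2 + Real.log x ≤ Real.log (2*x + 1/2) := by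
    rw [← Real.log_mul (by norm_num) hx0.ne']
    exact Real.log_le_log (by positivity) (by linarith)
  have hB : Real.log x ≤ 3*Real.log 2 - 1 + x/8 := by
    have h := Real.log_le_sub_one_of_pos (show (0:ℝ) < x/8 by positivity)
    rw [Real.log_div hx0.ne' (by norm_num)] at h
    have l8 : Real.log 8 = 3*Real.log 2 := by
      rw [show (8:ℝ) = 2^3 by norm_num, Real.log_pow]; push_cast; ring
    rw [l8] at h
    linarith
  have hC : Real.log (3/2) ≤ 5/12 := by
    have h := key1 (show (1:ℝ) ≤ 3/2 by norm_num)
    norm_num at h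
    linarith
  have hhalf : Real.log (1/2) = -Real.log 2 := by
    rw [show (1:ℝ)/2 = 2⁻¹ by norm_num, Real.log_inv]
  have hl2a := Real.log_two_gt_d9
  have hl2b := Real.log_two_lt_d9
  unfold H F cst
  rw [hhalf]
  have hA2 : (2*x+1/2)^2/2 * (Real.log 2 + Real.log x) ≤ (2*x+1/2)^2/2 * Real.log (2*x+1/2) :=
    mul_le_mul_of_nonneg_left hA (by positivity)
  have hB2 : (2*x+3/4) * Real.log x ≤ (2*x+3/4) * (3*Real.log 2 - 1 + x/8) :=
    mul_le_mul_of_nonneg_left hB (by linarith)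
  have hpos : 0 ≤ (7*x^2 - 7/2*x - 7/2) * (Real.log 2 - 0.6931471803) :=
    mul_nonneg (by nlinarith) (by linarith)
  nlinarith [hA2, hB2, hC, hpos, sq_nonneg (x - 5207/2000), hx, hlx0, hl2a, hl2b]

end LB

open LB in
set_option maxHeartbeats 2000000 in
theorem lower_bound (ℓ : ℕ) (hℓ : 1 ≤ ℓ) :
    Real.exp (-1/3) * ℓ ≤ Q ℓ := by
  set N : ℤ := 2 * (ℓ : ℤ) + 1 with hN
  set I : Finset ℤ := Finset.Icc 1 N with hI
  set x : ℝ := (ℓ : ℝ) with hxdef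
  have hx1 : (1:ℝ) ≤ x := by rw [hxdef]; exact_mod_cast hℓ
  have hx0 : (0:ℝ) < x := by linarith
  have hNR : ((N:ℤ):ℝ) = 2*x + 1 := by rw [hN, hxdef]; push_cast; ring
  have hN3 : (3:ℤ) ≤ N := by omega
  have hcard : (I.card : ℝ) = 2*x + 1 := by
    rw [hI, Int.card_Icc]
    have h1 : ((N + 1 - 1).toNat : ℤ) = N := by rw [Int.toNat_of_nonneg (by omega)]; ring
    have h2 : ((N + 1 - 1).toNat : ℝ) = ((N:ℤ):ℝ) := by exact_mod_cast congrArg (fun z : ℤ => (z:ℝ)) h1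
    rw [h2, hNR]
  -- the lattice cube as a product
  have hcube : latticeCube ℓ = I ×ˢ (I ×ˢ I) := rfl
  -- positivity of pairProd
  have hfac : ∀ p ∈ (latticeCube ℓ).sym2.filter (fun p => ¬ p.IsDiag), 0 < dfun p := by
    intro p hp
    induction p using Sym2.ind with
    | _ a b =>
      simp only [Finset.mem_filter, Sym2.mk_isDiag_iff] at hp
      have : dfun s(a,b) = dist (pt a) (pt b) := rfl
      rw [this]
      exact lt_of_le_of_ne dist_nonneg (Ne.symm (pt_ne hp.2))
  have hPpos : 0 < pairProd ℓ := Finset.prod_pos hfac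
  have hlogP : Real.log (pairProd ℓ)
      = ∑ p ∈ (latticeCube ℓ).sym2.filter (fun p => ¬ p.IsDiag), Real.log (dfun p) :=
    Real.log_prod (fun p hp => (hfac p hp).ne')
  -- per-pair inequality summed
  have hkey : ∀ z ∈ (latticeCube ℓ) ×ˢ (latticeCube ℓ),
      (fun i j => 1/3 * A (i - j)) z.1.1 z.2.1 * (fun _ _ => (1:ℝ)) z.1.2.1 z.2.2.1
          * (fun _ _ => (1:ℝ)) z.1.2.2 z.2.2.2
        + ((fun _ _ => (1:ℝ)) z.1.1 z.2.1 * (fun i j => 1/3 * A (i - j)) z.1.2.1 z.2.2.1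
          * (fun _ _ => (1:ℝ)) z.1.2.2 z.2.2.2
        + ((fun _ _ => (1:ℝ)) z.1.1 z.2.1 * (fun _ _ => (1:ℝ)) z.1.2.1 z.2.2.1
          * (fun i j => 1/3 * A (i - j)) z.1.2.2 z.2.2.2
        + (fun i j => cst * ee (i - j)) z.1.1 z.2.1 * (fun i j => ee (i - j)) z.1.2.1 z.2.2.1
          * (fun i j => ee (i - j)) z.1.2.2 z.2.2.2))
      ≤ Real.log (dist (pt z.1) (pt z.2)) := by
    intro z _
    rw [dist_pt z.1 z.2]
    have hp := pair_log (z.1.1 - z.2.1) (z.1.2.1 - z.2.2.1) (z.1.2.2 - z.2.2.2)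
    simp only []
    push_cast at hp ⊢
    linarith
  have hsum1 : ∑ z ∈ (latticeCube ℓ) ×ˢ (latticeCube ℓ),
      ((fun i j => 1/3 * A (i - j)) z.1.1 z.2.1 * (fun _ _ => (1:ℝ)) z.1.2.1 z.2.2.1
          * (fun _ _ => (1:ℝ)) z.1.2.2 z.2.2.2
        + ((fun _ _ => (1:ℝ)) z.1.1 z.2.1 * (fun i j => 1/3 * A (i - j)) z.1.2.1 z.2.2.1
          * (fun _ _ => (1:ℝ)) z.1.2.2 z.2.2.2
        + ((fun _ _ => (1:ℝ)) z.1.1 z.2.1 * (fun _ _ => (1:ℝ)) z.1.2.1 z.2.2.1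
          * (fun i j => 1/3 * A (i - j)) z.1.2.2 z.2.2.2
        + (fun i j => cst * ee (i - j)) z.1.1 z.2.1 * (fun i j => ee (i - j)) z.1.2.1 z.2.2.1
          * (fun i j => ee (i - j)) z.1.2.2 z.2.2.2)))
      ≤ ∑ z ∈ (latticeCube ℓ) ×ˢ (latticeCube ℓ), Real.log (dist (pt z.1) (pt z.2)) :=
    Finset.sum_le_sum hkey
  -- evaluate the four pieces
  have hT0 : ∑ p ∈ I ×ˢ I, (fun i j => 1/3 * A (i - j)) p.1 p.2
      = 1/3 * ∑ p ∈ I ×ˢ I, A (p.1 - p.2) := by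
    rw [Finset.mul_sum]
  have hsplit : ∑ z ∈ (latticeCube ℓ) ×ˢ (latticeCube ℓ),
      ((fun i j => 1/3 * A (i - j)) z.1.1 z.2.1 * (fun _ _ => (1:ℝ)) z.1.2.1 z.2.2.1
          * (fun _ _ => (1:ℝ)) z.1.2.2 z.2.2.2
        + ((fun _ _ => (1:ℝ)) z.1.1 z.2.1 * (fun i j => 1/3 * A (i - j)) z.1.2.1 z.2.2.1
          * (fun _ _ => (1:ℝ)) z.1.2.2 z.2.2.2
        + ((fun _ _ => (1:ℝ)) z.1.1 z.2.1 * (fun _ _ => (1:ℝ)) z.1.2.1 z.2.2.1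
          * (fun i j => 1/3 * A (i - j)) z.1.2.2 z.2.2.2
        + (fun i j => cst * ee (i - j)) z.1.1 z.2.1 * (fun i j => ee (i - j)) z.1.2.1 z.2.2.1
          * (fun i j => ee (i - j)) z.1.2.2 z.2.2.2)))
      = (1/3 * ∑ p ∈ I ×ˢ I, A (p.1 - p.2)) * ((I.card:ℝ)^2) * ((I.card:ℝ)^2)
        + ((I.card:ℝ)^2 * (1/3 * ∑ p ∈ I ×ˢ I, A (p.1 - p.2)) * ((I.card:ℝ)^2)
        + ((I.card:ℝ)^2 * (I.card:ℝ)^2 * (1/3 * ∑ p ∈ I ×ˢ I, A (p.1 - p.2))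
        + (cst * (((I.card:ℝ)^2 - I.card)))
            * (((I.card:ℝ)^2 - I.card)) * (((I.card:ℝ)^2 - I.card)))) := by
    rw [hcube]
    rw [Finset.sum_add_distrib, Finset.sum_add_distrib, Finset.sum_add_distrib]
    rw [sum_fgh I (fun i j => 1/3 * A (i - j)) (fun _ _ => (1:ℝ)) (fun _ _ => (1:ℝ)),
        sum_fgh I (fun _ _ => (1:ℝ)) (fun i j => 1/3 * A (i - j)) (fun _ _ => (1:ℝ)),
        sum_fgh I (fun _ _ => (1:ℝ)) (fun _ _ => (1:ℝ)) (fun i j => 1/3 * A (i - j)),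
        sum_fgh I (fun i j => cst * ee (i - j)) (fun i j => ee (i - j)) (fun i j => ee (i - j))]
    rw [hT0, onesum I, esum I]
    have hcstsum : ∑ p ∈ I ×ˢ I, cst * ee (p.1 - p.2) = cst * (((I.card:ℝ)^2 - I.card)) := by
      rw [← Finset.mul_sum, esum I]
    rw [hcstsum]
  -- T0 bound with casts
  have hTb := T0_bound hN3
  rw [hNR] at hTb
  have e1 : (2*x+1) - 1/2 = 2*x + 1/2 := by ring
  have e2 : (2*x+1) - 2 = 2*x - 1 := by ring
  rw [e1, e2] at hTb
  set T : ℝ := ∑ p ∈ I ×ˢ I, A (p.1 - p.2) with hTdef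
  have hTnn : 0 ≤ T := Finset.sum_nonneg (fun p _ => A_nonneg _)
  -- E^3 inequality
  have hE3 : (2*x+1)^4 * (cst * (4*x^2 - 2*x + 2/3))
      ≤ cst * (((2*x+1)^2 - (2*x+1))) * (((2*x+1)^2 - (2*x+1))) * (((2*x+1)^2 - (2*x+1))) := by
    have hkeyp : (((2*x+1)^2 - (2*x+1)))^3 - (2*x+1)^4*(4*x^2-2*x+2/3)
        = (2*x+1)^3 * (2/3*(x-1)) := by ring
    have hnn : 0 ≤ (2*x+1)^3 * (2/3*(x-1)) := by
      apply mul_nonneg (by positivity)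
      linarith
    nlinarith [cst_nonneg, hkeyp, hnn, mul_nonneg cst_nonneg hnn]
  -- assemble: big lower bound for the double sum of logs
  have hbig : ((2*x+1)^3)^2 * (Real.log x - 1/3)
      ≤ ∑ z ∈ (latticeCube ℓ) ×ˢ (latticeCube ℓ), Real.log (dist (pt z.1) (pt z.2)) := by
    have han := analytic hx1
    have han2 : (2*x+1)^4 * ((2*x+1)^2 * (Real.log x - 1/3))
        ≤ (2*x+1)^4 * (2*(H (2*x + 1/2) - H (3/2) - (2*x-1) * F (1/2)) + cst * (4*x^2 - 2*x + 2/3)) :=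
      mul_le_mul_of_nonneg_left han (by positivity)
    have hT4 : (2*x+1)^4 * (2*(H (2*x + 1/2) - H (3/2) - (2*x-1) * F (1/2)))
        ≤ (2*x+1)^4 * T := mul_le_mul_of_nonneg_left hTb (by positivity)
    have hsplit2 : ∑ z ∈ (latticeCube ℓ) ×ˢ (latticeCube ℓ),
        ((fun i j => 1/3 * A (i - j)) z.1.1 z.2.1 * (fun _ _ => (1:ℝ)) z.1.2.1 z.2.2.1
            * (fun _ _ => (1:ℝ)) z.1.2.2 z.2.2.2
          + ((fun _ _ => (1:ℝ)) z.1.1 z.2.1 * (fun i j => 1/3 * A (i - j)) z.1.2.1 z.2.2.1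
            * (fun _ _ => (1:ℝ)) z.1.2.2 z.2.2.2
          + ((fun _ _ => (1:ℝ)) z.1.1 z.2.1 * (fun _ _ => (1:ℝ)) z.1.2.1 z.2.2.1
            * (fun i j => 1/3 * A (i - j)) z.1.2.2 z.2.2.2
          + (fun i j => cst * ee (i - j)) z.1.1 z.2.1 * (fun i j => ee (i - j)) z.1.2.1 z.2.2.1
            * (fun i j => ee (i - j)) z.1.2.2 z.2.2.2)))
        = (2*x+1)^4 * T
          + cst * (((2*x+1)^2 - (2*x+1))) * (((2*x+1)^2 - (2*x+1))) * (((2*x+1)^2 - (2*x+1))) := by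
      rw [hsplit, hcard]
      ring
    calc ((2*x+1)^3)^2 * (Real.log x - 1/3)
        = (2*x+1)^4 * ((2*x+1)^2 * (Real.log x - 1/3)) := by ring
      _ ≤ (2*x+1)^4 * (2*(H (2*x + 1/2) - H (3/2) - (2*x-1) * F (1/2)) + cst * (4*x^2 - 2*x + 2/3)) := han2
      _ = (2*x+1)^4 * (2*(H (2*x + 1/2) - H (3/2) - (2*x-1) * F (1/2)))
            + (2*x+1)^4 * (cst * (4*x^2 - 2*x + 2/3)) := by ring
      _ ≤ (2*x+1)^4 * T
            + cst * (((2*x+1)^2 - (2*x+1))) * (((2*x+1)^2 - (2*x+1))) * (((2*x+1)^2 - (2*x+1))) := by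
          linarith [hT4, hE3]
      _ = _ := hsplit2.symm
      _ ≤ _ := hsum1
  -- relate to pairProd
  have hls := log_sum (latticeCube ℓ)
  have h2logP : ((2*x+1)^3)^2 * (Real.log x - 1/3) ≤ 2 * Real.log (pairProd ℓ) := by
    rw [hlogP]
    calc ((2*x+1)^3)^2 * (Real.log x - 1/3)
        ≤ ∑ z ∈ (latticeCube ℓ) ×ˢ (latticeCube ℓ), Real.log (dist (pt z.1) (pt z.2)) := hbig
      _ = 2 * ∑ p ∈ (latticeCube ℓ).sym2.filter (fun p => ¬ p.IsDiag), Real.log (dfun p) := hls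
  -- log Q
  have hcastn : (((2*ℓ+1)^3 : ℕ):ℝ) = (2*x+1)^3 := by rw [hxdef]; push_cast; ring
  have hlogQ : Real.log (Q ℓ) = (2:ℝ)/((2*x+1)^3)^2 * Real.log (pairProd ℓ) := by
    unfold Q
    rw [Real.log_rpow hPpos, hcastn]
  have h6pos : (0:ℝ) < ((2*x+1)^3)^2 := by positivity
  have hr : Real.log x - 1/3 ≤ Real.log (Q ℓ) := by
    rw [hlogQ, div_mul_eq_mul_div, le_div_iff₀ h6pos]
    linarith [h2logP]
  have hQpos : 0 < Q ℓ := by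
    unfold Q
    exact Real.rpow_pos_of_pos hPpos _
  calc Real.exp (-1/3) * (ℓ:ℝ)
      = Real.exp (Real.log x + (-1/3)) := by
        rw [Real.exp_add, Real.exp_log hx0, hxdef]; ring
    _ ≤ Real.exp (Real.log (Q ℓ)) := Real.exp_le_exp.mpr (by linarith [hr])
    _ = Q ℓ := Real.exp_log hQpos
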